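/- (Tezuka–Fushimi) Let p, q ∈ 𝔽₂[x] with deg p = m ≥ 1, deg q < m, and p, q coprime, and let w ≥ m be an integer word size. For each h ∈ H (the set of polynomials of degree < m) define the two-dimensional point P_h := (ν_w(h), ν_w(h·q %ₘ p)) ∈ [0,1)². Then the family (P_h)_{h ∈ H} is a (0, m, 2)-net in base 2 if and only if there exists a tuple (A_1, …, A_m) ∈ {x, x+1}^m whose Fibonacci polynomials (F_0 = 1, F_1 = A_1, F_k = A_k F_{k−1} + F_{k−2}) satisfy F_m = p and F_{m−1} = q; equivalently, if and only if all partial quotients in the continued fraction expansion of q/p have degree one. -/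

import Mathlib

open Polynomial
open Finset

/-- The Fibonacci polynomials over `𝔽₂` associated to a sequence of partial
quotients `A`: `F 0 = 1`, `F 1 = A 1`, `F (k+2) = A (k+2) * F (k+1) + F k`. -/
noncomputable def fibPoly (A : ℕ → Polynomial (ZMod 2)) : ℕ → Polynomial (ZMod 2)
  | 0 => 1
  | 1 => A 1
  | (k + 2) => A (k + 2) * fibPoly A (k + 1) + fibPoly A k

/-- `laurentCoeff p h j` is the coefficient `c_j(h)` of `x^{-j-1}` in the Laurent
expansion of `h(x)/p(x)` at infinity, computed as the `y^j`-coefficient of the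
power series `(reflect (m-1) h) * (reverse p)⁻¹` where `m = deg p`. -/
noncomputable def laurentCoeff (p h : Polynomial (ZMod 2)) (j : ℕ) : ZMod 2 :=
  PowerSeries.coeff (R := ZMod 2) j
    ((↑(h.reflect (p.natDegree - 1)) : PowerSeries (ZMod 2)) *
      (↑p.reverse : PowerSeries (ZMod 2))⁻¹)

/-- `ν_w(h) = Σ_{j<w} c_j(h) 2^{-j-1} ∈ [0,1)`. -/
noncomputable def nuW (w : ℕ) (p h : Polynomial (ZMod 2)) : ℝ :=
  ∑ j ∈ Finset.range w, ((laurentCoeff p h j).val : ℝ) / 2 ^ (j + 1)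

def Pprop (m : ℕ) (p q : Polynomial (ZMod 2)) : Prop :=
  ∀ d₁ d₂ : ℕ, d₁ + d₂ = m → ∀ h : Polynomial (ZMod 2),
    h.degree < (d₂ : WithBot ℕ) → (h * q %ₘ p).degree < (d₁ : WithBot ℕ) → h = 0

def Cprop (m : ℕ) (p q : Polynomial (ZMod 2)) : Prop :=
  ∃ A : ℕ → Polynomial (ZMod 2), (∀ k, 1 ≤ k → k ≤ m → A k = X ∨ A k = X + 1) ∧
    fibPoly A m = p ∧ fibPoly A (m - 1) = q

lemma zmod2_eq_one : ∀ {a : ZMod 2}, a ≠ 0 → a = 1 := by decide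

lemma deg_lt_zero {h : Polynomial (ZMod 2)} (hh : h.degree < ((0:ℕ) : WithBot ℕ)) : h = 0 := by
  by_contra h0
  rw [Polynomial.degree_eq_natDegree h0] at hh
  exact absurd (by exact_mod_cast hh : h.natDegree < 0) (by omega)

lemma fib_congr {A B : ℕ → Polynomial (ZMod 2)} :
    ∀ n, (∀ k, k ≤ n → A k = B k) → fibPoly A n = fibPoly B n := by
  intro n
  induction n using Nat.strong_induction_on with
  | _ n ih =>
    match n with
    | 0 => intro _; rfl
    | 1 => intro hk; simp [fibPoly, hk 1 le_rfl]
    | (k+2) =>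
      intro hk
      simp only [fibPoly]
      rw [ih (k+1) (by omega) (fun j hj => hk j (by omega)),
        ih k (by omega) (fun j hj => hk j (by omega)), hk (k+2) le_rfl]

lemma deg_A {a : Polynomial (ZMod 2)} (ha : a = X ∨ a = X + 1) : a.degree = 1 := by
  rcases ha with h | h <;> subst h
  · exact Polynomial.degree_X
  · simpa using Polynomial.degree_X_add_C (1 : ZMod 2)

lemma fib_deg {A : ℕ → Polynomial (ZMod 2)} :
    ∀ n, (∀ k, 1 ≤ k → k ≤ n → A k = X ∨ A k = X + 1) →
      (fibPoly A n).degree = (n : WithBot ℕ) := by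
  intro n
  induction n using Nat.strong_induction_on with
  | _ n ih =>
    match n with
    | 0 => intro _; simp [fibPoly]
    | 1 => intro hk; simpa [fibPoly] using deg_A (hk 1 le_rfl le_rfl)
    | (k+2) =>
      intro hk
      have h1 : (fibPoly A (k+1)).degree = ((k+1 : ℕ) : WithBot ℕ) :=
        ih (k+1) (by omega) (fun j h1 h2 => hk j h1 (by omega))
      have h0 : (fibPoly A k).degree = ((k : ℕ) : WithBot ℕ) :=
        ih k (by omega) (fun j hj1 hj2 => hk j hj1 (by omega))
      have hA : (A (k+2)).degree = 1 := deg_A (hk (k+2) (by omega) le_rfl)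
      have hmul : (A (k+2) * fibPoly A (k+1)).degree = ((k+2 : ℕ) : WithBot ℕ) := by
        rw [Polynomial.degree_mul, hA, h1]
        push_cast
        ring
      show (A (k + 2) * fibPoly A (k + 1) + fibPoly A k).degree = _
      rw [Polynomial.degree_add_eq_left_of_degree_lt, hmul]
      rw [hmul, h0]
      exact_mod_cast (by omega : k < k + 2)

lemma deg_one_cases {a : Polynomial (ZMod 2)} (h : a.degree = 1) : a = X ∨ a = X + 1 := by
  have h1 := Polynomial.eq_X_add_C_of_degree_le_one (le_of_eq h)
  have hnd : a.natDegree = 1 := Polynomial.natDegree_eq_of_degree_eq_some h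
  have hlc : a.coeff 1 = 1 := by
    have ha0 : a ≠ 0 := fun h0 => by rw [h0] at h; simp at h
    have := Polynomial.leadingCoeff_ne_zero.mpr ha0
    rw [Polynomial.leadingCoeff, hnd] at this
    exact zmod2_eq_one this
  rw [hlc, map_one, one_mul] at h1
  have : a.coeff 0 = 0 ∨ a.coeff 0 = 1 := by
    have : ∀ c : ZMod 2, c = 0 ∨ c = 1 := by decide
    exact this _
  rcases this with h0 | h0 <;> rw [h0] at h1
  · left; simpa using h1
  · right; simpa using h1

lemma q_ne_zero {m : ℕ} {p q : Polynomial (ZMod 2)} (hm : 1 ≤ m)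
    (hp : p.degree = (m : WithBot ℕ)) (hcop : IsCoprime p q) : q ≠ 0 := by
  intro h0
  rw [h0] at hcop
  have := Polynomial.isUnit_iff_degree_eq_zero.mp (isCoprime_zero_right.mp hcop)
  rw [hp] at this
  exact absurd (by exact_mod_cast this : m = 0) (by omega)

lemma pmonic {m : ℕ} {p : Polynomial (ZMod 2)} (hp : p.degree = (m : WithBot ℕ)) : p.Monic := by
  have hp0 : p ≠ 0 := by
    intro h
    rw [h, Polynomial.degree_zero] at hp
    exact (by exact_mod_cast WithBot.coe_ne_bot : ((m:ℕ) : WithBot ℕ) ≠ ⊥) hp.symm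
  exact zmod2_eq_one (Polynomial.leadingCoeff_ne_zero.mpr hp0)

lemma P_deg_q {m : ℕ} {p q : Polynomial (ZMod 2)} (hm : 1 ≤ m)
    (hp : p.degree = (m : WithBot ℕ)) (hq : q.degree < (m : WithBot ℕ))
    (hq0 : q ≠ 0) (hP : Pprop m p q) : q.degree = ((m - 1 : ℕ) : WithBot ℕ) := by
  have hmod : (1 * q) %ₘ p = q := by
    rw [one_mul]
    exact (Polynomial.modByMonic_eq_self_iff (pmonic hp)).mpr (by rw [hp]; exact hq)
  by_contra hne
  have h1 : (1 : Polynomial (ZMod 2)) = 0 := by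
    apply hP (m-1) 1 (by omega) 1
    · simpa using (by exact_mod_cast (by omega : (0:ℕ) < 1) : ((0:ℕ) : WithBot ℕ) < ((1:ℕ) : WithBot ℕ))
    · rw [hmod]
      rw [Polynomial.degree_eq_natDegree hq0] at hq hne ⊢
      have hlt : q.natDegree < m := by exact_mod_cast hq
      have : q.natDegree ≠ m - 1 := fun hh => hne (by rw [hh])
      exact_mod_cast (by omega : q.natDegree < m - 1)
  simpa using h1

lemma base_case {p q : Polynomial (ZMod 2)} (hp : p.degree = ((1:ℕ) : WithBot ℕ))
    (hq : q.degree < ((1:ℕ) : WithBot ℕ)) (hcop : IsCoprime p q) :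
    Pprop 1 p q ↔ Cprop 1 p q := by
  have hq0 : q ≠ 0 := q_ne_zero le_rfl hp hcop
  constructor
  · intro hP
    have hqdeg : q.degree = ((0:ℕ) : WithBot ℕ) := P_deg_q le_rfl hp hq hq0 hP
    have hq1 : q = 1 := by
      have := Polynomial.eq_C_of_degree_le_zero (le_of_eq (by exact_mod_cast hqdeg))
      rw [this]
      have hc : q.coeff 0 ≠ 0 := fun hc0 => hq0 (by rw [this, hc0, map_zero])
      rw [zmod2_eq_one hc, map_one]
    refine ⟨fun _ => p, fun k _ _ => deg_one_cases (by exact_mod_cast hp), rfl, by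
      simpa [fibPoly] using hq1.symm⟩
  · rintro ⟨A, hA, hm, hm1⟩
    have hq1 : q = 1 := by rw [← hm1]; rfl
    intro d₁ d₂ hsum h hh hmod
    rcases (by omega : d₂ = 0 ∨ (d₂ = 1 ∧ d₁ = 0)) with h2 | ⟨h2, h1⟩
    · subst h2; exact deg_lt_zero hh
    · subst h2; subst h1
      rw [hq1, mul_one] at hmod
      rw [(Polynomial.modByMonic_eq_self_iff (pmonic hp)).mpr (by rw [hp]; exact_mod_cast hh)] at hmod
      exact deg_lt_zero hmod

lemma C_step {m : ℕ} {p q : Polynomial (ZMod 2)} (hm : 2 ≤ m)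
    (hp : p.degree = (m : WithBot ℕ)) (hqdeg : q.degree = ((m - 1 : ℕ) : WithBot ℕ)) :
    Cprop m p q ↔ Cprop (m - 1) q (p %ₘ q) := by
  obtain ⟨k, rfl⟩ : ∃ k, m = k + 2 := ⟨m - 2, by omega⟩
  have hmq : q.Monic := pmonic hqdeg
  constructor
  · rintro ⟨A, hA, hFm, hFm1⟩
    have hk1 : k + 2 - 1 = k + 1 := by omega
    rw [hk1] at hFm1
    have hdegk : (fibPoly A k).degree = ((k:ℕ) : WithBot ℕ) :=
      fib_deg k (fun j hj1 hj2 => hA j hj1 (by omega))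
    have hmod : p %ₘ q = fibPoly A k := by
      have := Polynomial.div_modByMonic_unique (f := p) (g := q) (A (k+2)) (fibPoly A k) hmq
        ⟨by rw [← hFm1, ← hFm]; show fibPoly A k + _ = _; simp [fibPoly]; ring,
         by rw [hdegk, hqdeg]; exact_mod_cast (by omega : k < k + 2 - 1)⟩
      exact this.2
    refine ⟨A, fun j hj1 hj2 => hA j hj1 (by omega), by rw [hk1]; exact hFm1, ?_⟩
    rw [hmod]
    have he : k + 2 - 1 - 1 = k := by omega
    rw [he]
  · rintro ⟨A', hA', hF1, hF2⟩
    have hk1 : k + 2 - 1 = k + 1 := by omega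
    rw [hk1] at hF1 hF2
    have hk2 : k + 1 - 1 = k := by omega
    rw [hk2] at hF2
    -- degree of p /ₘ q is 1
    have hsum := Polynomial.modByMonic_add_div p q
    have hrdeg : (p %ₘ q).degree < q.degree := Polynomial.degree_modByMonic_lt p hmq
    have hqmul : (q * (p /ₘ q)).degree = ((k + 2 : ℕ) : WithBot ℕ) := by
      have : q * (p /ₘ q) = p - p %ₘ q := by linear_combination hsum
      rw [this, Polynomial.degree_sub_eq_left_of_degree_lt, hp]
      rw [hp, hqdeg] at *
      calc (p %ₘ q).degree < ((k + 2 - 1 : ℕ) : WithBot ℕ) := hrdeg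
        _ < ((k + 2 : ℕ) : WithBot ℕ) := by exact_mod_cast (by omega : k + 2 - 1 < k + 2)
    have hdq : (p /ₘ q).degree = ((1:ℕ) : WithBot ℕ) := by
      have h0 : p /ₘ q ≠ 0 := by
        intro h0
        rw [h0, mul_zero, Polynomial.degree_zero] at hqmul
        exact (by exact_mod_cast WithBot.coe_ne_bot : ((k+2:ℕ) : WithBot ℕ) ≠ ⊥) hqmul.symm
      rw [Polynomial.degree_mul, hqdeg, Polynomial.degree_eq_natDegree h0] at hqmul
      have : (k + 2 - 1) + (p /ₘ q).natDegree = k + 2 := by exact_mod_cast hqmul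
      rw [Polynomial.degree_eq_natDegree h0]
      exact_mod_cast (by omega : (p /ₘ q).natDegree = 1)
    set A : ℕ → Polynomial (ZMod 2) := fun j => if j = k + 2 then p /ₘ q else A' j with hAdef
    have hcong : ∀ n, n ≤ k + 1 → fibPoly A n = fibPoly A' n := by
      intro n hn
      exact fib_congr n (fun j hj => by
        simp only [hAdef]; rw [if_neg (by omega : ¬ j = k + 2)])
    refine ⟨A, ?_, ?_, ?_⟩
    · intro j hj1 hj2
      by_cases hje : j = k + 2
      · subst hje; simp only [hAdef, if_pos rfl]; exact deg_one_cases (by exact_mod_cast hdq)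
      · simp only [hAdef, if_neg hje]; exact hA' j hj1 (by omega)
    · show fibPoly A (k + 2) = p
      simp only [fibPoly]
      rw [hcong (k+1) le_rfl, hcong k (by omega), hF1, hF2]
      simp only [hAdef, if_pos rfl]
      linear_combination hsum
    · rw [hk1, hcong (k+1) le_rfl, hF1]

lemma ne_zero_of_deg {n : ℕ} {f : Polynomial (ZMod 2)} (hf : f.degree = (n : WithBot ℕ)) :
    f ≠ 0 := by
  intro h0
  rw [h0, Polynomial.degree_zero] at hf
  exact (by exact_mod_cast WithBot.coe_ne_bot : ((n:ℕ) : WithBot ℕ) ≠ ⊥) hf.symm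

lemma P_step {m : ℕ} {p q : Polynomial (ZMod 2)} (hm : 2 ≤ m)
    (hp : p.degree = (m : WithBot ℕ)) (hqdeg : q.degree = ((m - 1 : ℕ) : WithBot ℕ)) :
    Pprop m p q ↔ Pprop (m - 1) q (p %ₘ q) := by
  have hmp : p.Monic := pmonic hp
  have hmq : q.Monic := pmonic hqdeg
  have hp0 : p ≠ 0 := ne_zero_of_deg hp
  have hq0 : q ≠ 0 := ne_zero_of_deg hqdeg
  set a := p /ₘ q with ha
  set r := p %ₘ q with hrdef
  have hsum : r + q * a = p := Polynomial.modByMonic_add_div p q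
  have hr : r.degree < q.degree := Polynomial.degree_modByMonic_lt p hmq
  constructor
  · -- P m p q → P (m-1) q r
    intro hP d₁ d₂ hd g hg hgr
    by_contra hg0
    set t := (g * r) %ₘ q with htdef
    set k := (g * r) /ₘ q with hkdef
    have hts : t + q * k = g * r := Polynomial.modByMonic_add_div _ q
    have htq : t.degree < q.degree := Polynomial.degree_modByMonic_lt _ hmq
    set h := g * a + k with hhdef
    have key : h * q = g * p - t := by
      simp only [hhdef]
      linear_combination g * hsum + hts
    have hgdeg0 : (0 : WithBot ℕ) ≤ g.degree := Polynomial.zero_le_degree_iff.mpr hg0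
    have hgpdeg : (g * p).degree = g.degree + (m : WithBot ℕ) := by
      rw [Polynomial.degree_mul, hp]
    have htltgp : t.degree < (g * p).degree := by
      rw [hgpdeg]
      calc t.degree < q.degree := htq
        _ = ((m-1:ℕ) : WithBot ℕ) := hqdeg
        _ < (m : WithBot ℕ) := by exact_mod_cast (by omega : m - 1 < m)
        _ ≤ g.degree + (m : WithBot ℕ) := le_add_of_nonneg_left hgdeg0
    have hne : h ≠ 0 := by
      intro h0
      rw [h0, zero_mul] at key
      have : t = g * p := by linear_combination key
      rw [this] at htltgp
      exact lt_irrefl _ htltgp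
    have hmod : (h * q) %ₘ p = -t := by
      refine (Polynomial.div_modByMonic_unique g (-t) hmp ⟨by linear_combination - key, ?_⟩).2
      rw [Polynomial.degree_neg, hp]
      calc t.degree < q.degree := htq
        _ = ((m-1:ℕ) : WithBot ℕ) := hqdeg
        _ < (m : WithBot ℕ) := by exact_mod_cast (by omega : m - 1 < m)
    -- degree of h
    have hhq : (h * q).degree = (g * p).degree := by
      rw [key]
      exact Polynomial.degree_sub_eq_left_of_degree_lt htltgp
    have hng : g.natDegree < d₂ := (Polynomial.natDegree_lt_iff_degree_lt hg0).mpr hg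
    have hnh : h.natDegree < d₂ + 1 := by
      rw [Polynomial.degree_mul, Polynomial.degree_mul, hp, hqdeg,
        Polynomial.degree_eq_natDegree hne, Polynomial.degree_eq_natDegree hg0] at hhq
      have : h.natDegree + (m - 1) = g.natDegree + m := by exact_mod_cast hhq
      omega
    have := hP d₁ (d₂ + 1) (by omega) h
      ((Polynomial.natDegree_lt_iff_degree_lt hne).mp hnh)
      (by rw [hmod, Polynomial.degree_neg]; exact hgr)
    exact hne this
  · -- P (m-1) q r → P m p q
    intro hP d₁ d₂ hd h hh hhs
    by_contra h0
    set s := (h * q) %ₘ p with hsdef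
    set g := (h * q) /ₘ p with hgdef
    have hsp : s + p * g = h * q := Polynomial.modByMonic_add_div _ p
    have hnh : h.natDegree < d₂ := (Polynomial.natDegree_lt_iff_degree_lt h0).mpr hh
    have hd2 : 1 ≤ d₂ := by omega
    have hhq : (h * q).degree = ((h.natDegree + (m - 1) : ℕ) : WithBot ℕ) := by
      rw [Polynomial.degree_mul, hqdeg, Polynomial.degree_eq_natDegree h0]
      push_cast
      ring
    by_cases hd21 : d₂ = 1
    · -- h is a nonzero constant
      have hnh0 : h.natDegree = 0 := by omega
      have hsself : s = h * q := by
        rw [hsdef]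
        refine (Polynomial.modByMonic_eq_self_iff hmp).mpr ?_
        rw [hhq, hp, hnh0]
        exact_mod_cast (by omega : 0 + (m - 1) < m)
      have : s.degree < ((d₁ : ℕ) : WithBot ℕ) := hhs
      rw [hsself, hhq, hnh0] at this
      have : 0 + (m - 1) < d₁ := by exact_mod_cast this
      omega
    · have hd22 : 2 ≤ d₂ := by omega
      have hg0' : g ≠ 0 := by
        intro hg0
        rw [hg0, mul_zero, add_zero] at hsp
        rw [hsp, hhq] at hhs
        have : h.natDegree + (m - 1) < d₁ := by exact_mod_cast hhs
        omega
      have key2 : -s + q * (h - g * a) = g * r := by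
        linear_combination - hsp - g * hsum
      have hsd : s.degree < ((d₁ : ℕ) : WithBot ℕ) := hhs
      have hmod2 : (g * r) %ₘ q = -s := by
        refine (Polynomial.div_modByMonic_unique (h - g * a) (-s) hmq ⟨key2, ?_⟩).2
        rw [Polynomial.degree_neg, hqdeg]
        calc s.degree < ((d₁ : ℕ) : WithBot ℕ) := hsd
          _ ≤ ((m - 1 : ℕ) : WithBot ℕ) := by exact_mod_cast (by omega : d₁ ≤ m - 1)
      have hpg : (p * g).degree = ((m + g.natDegree : ℕ) : WithBot ℕ) := by
        rw [Polynomial.degree_mul, hp, Polynomial.degree_eq_natDegree hg0']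
        push_cast
        ring
      have hsltpg : s.degree < (p * g).degree := by
        rw [hpg]
        calc s.degree < ((d₁ : ℕ) : WithBot ℕ) := hsd
          _ ≤ ((m + g.natDegree : ℕ) : WithBot ℕ) := by
              exact_mod_cast (by omega : d₁ ≤ m + g.natDegree)
      have hhq2 : (h * q).degree = (p * g).degree := by
        rw [← hsp, Polynomial.degree_add_eq_right_of_degree_lt hsltpg]
      have hng : g.natDegree < d₂ - 1 := by
        rw [hhq, hpg] at hhq2
        have : h.natDegree + (m - 1) = m + g.natDegree := by exact_mod_cast hhq2
        omega
      have := hP d₁ (d₂ - 1) (by omega) g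
        ((Polynomial.natDegree_lt_iff_degree_lt hg0').mp hng)
        (by rw [hmod2, Polynomial.degree_neg]; exact hhs)
      exact hg0' this

lemma PC : ∀ m : ℕ, 1 ≤ m → ∀ p q : Polynomial (ZMod 2), p.degree = ((m : ℕ) : WithBot ℕ) →
    q.degree < ((m : ℕ) : WithBot ℕ) → IsCoprime p q → (Pprop m p q ↔ Cprop m p q) := by
  intro m
  induction m using Nat.strong_induction_on with
  | _ m ih =>
    intro hm p q hp hq hcop
    rcases eq_or_lt_of_le hm with h1 | h2
    · obtain rfl : m = 1 := h1.symm
      exact base_case hp hq hcop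
    · have hm2 : 2 ≤ m := h2
      have hq0 : q ≠ 0 := q_ne_zero hm hp hcop
      set a := p /ₘ q with ha
      set r := p %ₘ q with hrdef
      have hcop' : IsCoprime q r := by
        have hmq : q.Monic := by
          exact zmod2_eq_one (Polynomial.leadingCoeff_ne_zero.mpr hq0)
        have hsum : r + q * a = p := Polynomial.modByMonic_add_div p q
        have req : r = p + q * (-a) := by linear_combination hsum
        rw [req]
        exact (hcop.symm).add_mul_left_right (-a)
      constructor
      · intro hP
        have hqdeg : q.degree = ((m - 1 : ℕ) : WithBot ℕ) := P_deg_q hm hp hq hq0 hP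
        have hmq : q.Monic := pmonic hqdeg
        have hr : r.degree < q.degree := Polynomial.degree_modByMonic_lt p hmq
        have hC' := (ih (m-1) (by omega) (by omega) q r hqdeg (by rw [← hqdeg]; exact hr)
          hcop').mp ((P_step hm2 hp hqdeg).mp hP)
        exact (C_step hm2 hp hqdeg).mpr hC'
      · intro hC
        have hqdeg : q.degree = ((m - 1 : ℕ) : WithBot ℕ) := by
          obtain ⟨A, hA, hFm, hFm1⟩ := hC
          rw [← hFm1]
          exact fib_deg (m-1) (fun j h1 h2 => hA j h1 (by omega))
        have hmq : q.Monic := pmonic hqdeg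
        have hr : r.degree < q.degree := Polynomial.degree_modByMonic_lt p hmq
        have hP' := (ih (m-1) (by omega) (by omega) q r hqdeg (by rw [← hqdeg]; exact hr)
          hcop').mpr ((C_step hm2 hp hqdeg).mp hC)
        exact (P_step hm2 hp hqdeg).mpr hP'




lemma coeff_mul_lo {f v : PowerSeries (ZMod 2)} {d : ℕ}
    (hf : ∀ i < d, PowerSeries.coeff i f = 0) :
    ∀ j < d, PowerSeries.coeff j (f * v) = 0 := by
  intro j hj
  rw [PowerSeries.coeff_mul]
  apply Finset.sum_eq_zero
  rintro ⟨i, k⟩ hik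
  rw [Finset.HasAntidiagonal.mem_antidiagonal] at hik
  have : i ≤ j := by omega
  rw [hf i (lt_of_le_of_lt this hj), zero_mul]

lemma coeff_mul_inv_lo_iff {f u : PowerSeries (ZMod 2)} {d : ℕ}
    (hu : PowerSeries.constantCoeff u ≠ 0) :
    (∀ j < d, PowerSeries.coeff j (f * u⁻¹) = 0) ↔
      (∀ j < d, PowerSeries.coeff j f = 0) := by
  constructor
  · intro h j hj
    have hf : f = f * u⁻¹ * u := by
      rw [mul_assoc, PowerSeries.inv_mul_cancel _ hu, mul_one]
    rw [hf]
    exact coeff_mul_lo h j hj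
  · intro h
    exact coeff_mul_lo h

lemma rev_const {m : ℕ} {p : Polynomial (ZMod 2)} (hp : p.degree = (m : WithBot ℕ)) :
    PowerSeries.constantCoeff (↑p.reverse : PowerSeries (ZMod 2)) ≠ 0 := by
  rw [← PowerSeries.coeff_zero_eq_constantCoeff_apply, Polynomial.coeff_coe,
    Polynomial.coeff_zero_reverse, pmonic hp]
  exact one_ne_zero
lemma vanish_iff {m : ℕ} {p : Polynomial (ZMod 2)} (hp : p.degree = (m : WithBot ℕ)) (hm : 1 ≤ m)
    {h : Polynomial (ZMod 2)} (hh : h.degree < (m : WithBot ℕ)) {d : ℕ} (hd : d ≤ m) :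
    (∀ j < d, laurentCoeff p h j = 0) ↔ h.degree < ((m - d : ℕ) : WithBot ℕ) := by
  have hnd : p.natDegree = m := Polynomial.natDegree_eq_of_degree_eq_some hp
  have step1 : (∀ j < d, laurentCoeff p h j = 0) ↔
      (∀ j < d, h.coeff (m - 1 - j) = 0) := by
    unfold laurentCoeff
    rw [coeff_mul_inv_lo_iff (rev_const hp)]
    constructor <;> intro H j hj <;>
      have := H j hj <;>
      rw [Polynomial.coeff_coe, Polynomial.coeff_reflect, hnd,
        Polynomial.revAt_le (by omega : j ≤ m - 1)] at * <;> exact this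
  rw [step1, Polynomial.degree_lt_iff_coeff_zero h (m - d)]
  have hcm : ∀ k, m ≤ k → h.coeff k = 0 := by
    intro k hk
    exact (Polynomial.degree_lt_iff_coeff_zero h m).mp hh k hk
  constructor
  · intro H k hk
    by_cases hkm : m ≤ k
    · exact hcm k hkm
    · have hj : m - 1 - (m - 1 - k) = k := by omega
      have : m - 1 - k < d := by omega
      have := H _ this
      rwa [hj] at this
  · intro H j hj
    exact H _ (by omega)


-- value of a ZMod 2 element is ≤ 1
lemma val_le_one (a : ZMod 2) : a.val ≤ 1 := Nat.lt_succ_iff.mp (ZMod.val_lt a)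

lemma enc_lt (c : ℕ → ZMod 2) (d : ℕ) :
    ∑ j ∈ range d, (c j).val * 2 ^ j < 2 ^ d := by
  induction d with
  | zero => simp
  | succ d ih =>
    rw [Finset.sum_range_succ]
    have := val_le_one (c d)
    have h2 : (c d).val * 2 ^ d ≤ 2 ^ d := by
      calc (c d).val * 2 ^ d ≤ 1 * 2 ^ d := Nat.mul_le_mul_right _ this
      _ = 2 ^ d := one_mul _
    calc ∑ j ∈ range d, (c j).val * 2 ^ j + (c d).val * 2 ^ d
        < 2 ^ d + (c d).val * 2 ^ d := by omega
      _ ≤ 2 ^ d + 2 ^ d := by omega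
      _ = 2 ^ (d + 1) := by ring

lemma enc_digit (c : ℕ → ZMod 2) (d j : ℕ) (hj : j < d) :
    (∑ i ∈ range d, (c i).val * 2 ^ i) / 2 ^ j % 2 = (c j).val := by
  have hsplit : ∑ i ∈ range d, (c i).val * 2 ^ i =
      (∑ i ∈ range j, (c i).val * 2 ^ i) + (c j).val * 2 ^ j
        + ∑ i ∈ Finset.Ico (j+1) d, (c i).val * 2 ^ i := by
    rw [← Finset.sum_range_succ, Finset.sum_range_add_sum_Ico _ (by omega : j + 1 ≤ d)]
  have hA : ∑ i ∈ range j, (c i).val * 2 ^ i < 2 ^ j := enc_lt c j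
  have hdvd : (2 ^ (j+1) : ℕ) ∣ ∑ i ∈ Finset.Ico (j+1) d, (c i).val * 2 ^ i := by
    apply Finset.dvd_sum
    intro i hi
    rw [Finset.mem_Ico] at hi
    exact Dvd.dvd.mul_left (pow_dvd_pow 2 hi.1) _
  obtain ⟨B, hB⟩ := hdvd
  rw [hsplit, hB]
  set A := ∑ i ∈ range j, (c i).val * 2 ^ i with hAdef
  have hv := val_le_one (c j)
  have : A + (c j).val * 2 ^ j + 2 ^ (j+1) * B = A + 2 ^ j * ((c j).val + 2 * B) := by ring
  rw [this, Nat.add_mul_div_left _ _ (Nat.pow_pos (by norm_num)), Nat.div_eq_of_lt hA]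
  omega

lemma val_inj2 : ∀ a b : ZMod 2, a.val = b.val → a = b := by decide

lemma enc_eq_digits_eq {c c' : ℕ → ZMod 2} {d : ℕ}
    (h : ∑ j ∈ range d, (c j).val * 2 ^ j = ∑ j ∈ range d, (c' j).val * 2 ^ j) :
    ∀ j < d, c j = c' j := by
  intro j hj
  apply val_inj2
  rw [← enc_digit c d j hj, ← enc_digit c' d j hj, h]

-- tail bound
lemma tail_bound (c : ℕ → ZMod 2) (d w : ℕ) (hdw : d ≤ w) :
    ∑ j ∈ Finset.Ico d w, ((c j).val : ℝ) / 2 ^ (j + 1) ≤ 1 / 2 ^ d - 1 / 2 ^ w := by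
  induction w, hdw using Nat.le_induction with
  | base => simp
  | succ w hdw ih =>
    rw [Finset.sum_Ico_succ_top hdw]
    have hv : ((c w).val : ℝ) ≤ 1 := by exact_mod_cast val_le_one (c w)
    have h1 : ((c w).val : ℝ) / 2 ^ (w + 1) ≤ 1 / 2 ^ (w + 1) := by
      apply div_le_div_of_nonneg_right hv (by positivity) |>.trans_eq rfl
    have h2 : (1 : ℝ) / 2 ^ w - 1 / 2 ^ (w+1) = 1 / 2 ^ (w + 1) := by
      rw [pow_succ]; ring
    nlinarith [ih]

lemma tail_nonneg (c : ℕ → ZMod 2) (d w : ℕ) :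
    0 ≤ ∑ j ∈ Finset.Ico d w, ((c j).val : ℝ) / 2 ^ (j + 1) := by
  apply Finset.sum_nonneg; intro j _; positivity

lemma head_eq (c : ℕ → ZMod 2) (d : ℕ) :
    ((∑ j ∈ range d, (c j).val * 2 ^ (d - 1 - j) : ℕ) : ℝ) =
      2 ^ d * ∑ j ∈ range d, ((c j).val : ℝ) / 2 ^ (j + 1) := by
  rw [Finset.mul_sum]
  push_cast
  apply Finset.sum_congr rfl
  intro j hj
  rw [Finset.mem_range] at hj
  have : (2:ℝ) ^ (d - 1 - j) * 2 ^ (j+1) = 2 ^ d := by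
    rw [← pow_add]; congr 1; omega
  field_simp
  rw [mul_assoc, this, mul_comm]

lemma box_iff (c : ℕ → ZMod 2) (d w r : ℕ) (hdw : d ≤ w) (hr : r < 2 ^ d) :
    ((r : ℝ) / 2 ^ d ≤ ∑ j ∈ range w, ((c j).val : ℝ) / 2 ^ (j + 1) ∧
      (∑ j ∈ range w, ((c j).val : ℝ) / 2 ^ (j + 1)) < ((r : ℝ) + 1) / 2 ^ d) ↔
    (∑ j ∈ range d, (c j).val * 2 ^ (d - 1 - j)) = r := by
  set N : ℕ := ∑ j ∈ range d, (c j).val * 2 ^ (d - 1 - j) with hN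
  set S : ℝ := ∑ j ∈ range d, ((c j).val : ℝ) / 2 ^ (j + 1) with hS
  set T : ℝ := ∑ j ∈ Finset.Ico d w, ((c j).val : ℝ) / 2 ^ (j + 1) with hT
  have hsplit : ∑ j ∈ range w, ((c j).val : ℝ) / 2 ^ (j + 1) = S + T :=
    (Finset.sum_range_add_sum_Ico _ hdw).symm
  have hpos : (0:ℝ) < 2 ^ d := by positivity
  have hwpos : (0:ℝ) < 1 / 2 ^ w := by positivity
  have hNS : (N : ℝ) = 2 ^ d * S := head_eq c d
  have hT0 : 0 ≤ T := tail_nonneg c d w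
  have hT1 : T < 1 / 2 ^ d := lt_of_le_of_lt (tail_bound c d w hdw) (by linarith)
  rw [hsplit]
  constructor
  · rintro ⟨h1, h2⟩
    rw [div_le_iff₀ hpos] at h1
    rw [lt_div_iff₀ hpos] at h2
    -- h1 : r ≤ (S+T)*2^d,  h2 : (S+T)*2^d < r+1
    have e1 : (r : ℝ) ≤ (N : ℝ) + 2 ^ d * T := by rw [hNS]; nlinarith
    have e2 : (N : ℝ) + 2 ^ d * T < (r : ℝ) + 1 := by rw [hNS]; nlinarith
    have hTlt : 2 ^ d * T < 1 := by
      calc 2 ^ d * T < 2 ^ d * (1 / 2 ^ d) := by nlinarith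
        _ = 1 := by field_simp
    have hT0' : 0 ≤ 2 ^ d * T := by positivity
    have hle : (r : ℝ) < (N : ℝ) + 1 := by linarith
    have hge : (N : ℝ) < (r : ℝ) + 1 := by linarith
    have h1' : r < N + 1 := by exact_mod_cast (by push_cast; linarith : (r:ℝ) < (N:ℝ) + 1)
    have h2' : N < r + 1 := by exact_mod_cast (by push_cast; linarith : (N:ℝ) < (r:ℝ) + 1)
    omega
  · intro h
    have hNr : (N : ℝ) = (r : ℝ) := by exact_mod_cast congrArg (Nat.cast (R := ℝ)) h
    have hSr : S = (r : ℝ) / 2 ^ d := by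
      field_simp
      nlinarith [hNS, hNr]
    constructor
    · rw [hSr] at *; linarith [div_nonneg (Nat.cast_nonneg (α := ℝ) r) hpos.le]
    · have hsplit2 : ((r:ℝ) + 1) / 2 ^ d = (r:ℝ) / 2 ^ d + 1 / 2 ^ d := by ring
      rw [hSr, hsplit2]; linarith

lemma laurentCoeff_add (p h₁ h₂ : Polynomial (ZMod 2)) (j : ℕ) :
    laurentCoeff p (h₁ + h₂) j = laurentCoeff p h₁ j + laurentCoeff p h₂ j := by
  unfold laurentCoeff
  rw [Polynomial.reflect_add, Polynomial.coe_add, add_mul, map_add]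

lemma laurentCoeff_zero (p : Polynomial (ZMod 2)) (j : ℕ) : laurentCoeff p 0 j = 0 := by
  unfold laurentCoeff
  rw [Polynomial.reflect_zero, Polynomial.coe_zero, zero_mul, map_zero]

lemma zmod2_add_eq_zero : ∀ x y : ZMod 2, x + y = 0 → x = y := by decide

lemma poly_add_eq_zero {a b : Polynomial (ZMod 2)} (h : a + b = 0) : a = b := by
  ext n
  have := congrArg (fun f => Polynomial.coeff f n) h
  simp only [Polynomial.coeff_add, Polynomial.coeff_zero] at this
  exact zmod2_add_eq_zero _ _ this

def Nnum (d : ℕ) (c : ℕ → ZMod 2) : ℕ := ∑ j ∈ Finset.range d, (c j).val * 2 ^ (d - 1 - j)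

lemma Nnum_rev (c : ℕ → ZMod 2) (d : ℕ) :
    Nnum d c = ∑ j ∈ Finset.range d, (c (d - 1 - j)).val * 2 ^ j := by
  rw [Nnum, ← Finset.sum_range_reflect (fun j => (c (d - 1 - j)).val * 2 ^ j) d]
  apply Finset.sum_congr rfl
  intro j hj
  rw [Finset.mem_range] at hj
  have : d - 1 - (d - 1 - j) = j := by omega
  rw [this]

lemma Nnum_lt (c : ℕ → ZMod 2) (d : ℕ) : Nnum d c < 2 ^ d := by
  rw [Nnum_rev]; exact enc_lt _ d

lemma Nnum_inj {c c' : ℕ → ZMod 2} {d : ℕ} (h : Nnum d c = Nnum d c') :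
    ∀ j < d, c j = c' j := by
  rw [Nnum_rev, Nnum_rev] at h
  intro j hj
  have hlt : d - 1 - j < d := by omega
  have := enc_eq_digits_eq h (d - 1 - j) hlt
  have he : d - 1 - (d - 1 - j) = j := by omega
  rwa [he] at this

lemma Nnum_zero_iff {c : ℕ → ZMod 2} {d : ℕ} : Nnum d c = 0 ↔ ∀ j < d, c j = 0 := by
  constructor
  · intro h j hj
    have h0 : Nnum d (fun _ => (0 : ZMod 2)) = 0 := by
      simp [Nnum, ZMod.val_zero]
    exact Nnum_inj (h.trans h0.symm) j hj
  · intro h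
    rw [Nnum]
    apply Finset.sum_eq_zero
    intro j hj
    rw [Finset.mem_range] at hj
    rw [h j hj, ZMod.val_zero, zero_mul]

lemma box_iff' {p h : Polynomial (ZMod 2)} {d w r : ℕ} (hdw : d ≤ w) (hr : r < 2 ^ d) :
    ((r : ℝ) / 2 ^ d ≤ nuW w p h ∧ nuW w p h < ((r : ℝ) + 1) / 2 ^ d) ↔
      Nnum d (laurentCoeff p h) = r :=
  box_iff (laurentCoeff p h) d w r hdw hr


lemma net_iff_P {m w : ℕ} (hm : 1 ≤ m) (hw : m ≤ w) {p q : Polynomial (ZMod 2)}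
    (hp : p.degree = (m : WithBot ℕ)) :
    (∀ d₁ d₂ : ℕ, d₁ + d₂ = m → ∀ r₁ r₂ : ℕ, r₁ < 2 ^ d₁ → r₂ < 2 ^ d₂ →
        ∃! h : Polynomial (ZMod 2), h.degree < (m : WithBot ℕ) ∧
          ((r₁ : ℝ) / 2 ^ d₁ ≤ nuW w p h ∧ nuW w p h < ((r₁ : ℝ) + 1) / 2 ^ d₁) ∧
          ((r₂ : ℝ) / 2 ^ d₂ ≤ nuW w p (h * q %ₘ p) ∧
            nuW w p (h * q %ₘ p) < ((r₂ : ℝ) + 1) / 2 ^ d₂)) ↔ Pprop m p q := by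
  have hmp : p.Monic := pmonic hp
  have hmodlt : ∀ h : Polynomial (ZMod 2), (h * q %ₘ p).degree < (m : WithBot ℕ) :=
    fun h => hp ▸ Polynomial.degree_modByMonic_lt _ hmp
  have hzero_add : ∀ x : ZMod 2, x + x = 0 := by decide
  constructor
  · -- net → P
    intro hnet d₁ d₂ hd h hdeg hmod
    have hd₁ : d₁ ≤ m := by omega
    have hd₂ : d₂ ≤ m := by omega
    have hdegm : h.degree < (m : WithBot ℕ) :=
      lt_of_lt_of_le hdeg (by exact_mod_cast (by omega : d₂ ≤ m))
    have hz1 : ∀ j < d₁, laurentCoeff p h j = 0 := by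
      refine (vanish_iff hp hm hdegm hd₁).mpr ?_
      have e : ((m - d₁ : ℕ) : WithBot ℕ) = (d₂ : WithBot ℕ) := by
        exact_mod_cast congrArg (Nat.cast (R := WithBot ℕ)) (by omega : m - d₁ = d₂)
      rw [e]; exact hdeg
    have hz2 : ∀ j < d₂, laurentCoeff p (h * q %ₘ p) j = 0 := by
      refine (vanish_iff hp hm (hmodlt h) hd₂).mpr ?_
      have e : ((m - d₂ : ℕ) : WithBot ℕ) = (d₁ : WithBot ℕ) := by
        exact_mod_cast congrArg (Nat.cast (R := WithBot ℕ)) (by omega : m - d₂ = d₁)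
      rw [e]; exact hmod
    obtain ⟨h₀, _, huniq⟩ := hnet d₁ d₂ hd 0 0 (by positivity) (by positivity)
    have hhbox := huniq h ⟨hdegm,
      (box_iff' (by omega) (by positivity)).mpr (Nnum_zero_iff.mpr hz1),
      (box_iff' (by omega) (by positivity)).mpr (Nnum_zero_iff.mpr hz2)⟩
    have h0box := huniq 0 ⟨by rw [Polynomial.degree_zero]; exact WithBot.bot_lt_coe m,
      (box_iff' (by omega : d₁ ≤ w) (by positivity)).mpr
        (Nnum_zero_iff.mpr (fun j _ => laurentCoeff_zero p j)),
      by
        rw [zero_mul, Polynomial.zero_modByMonic]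
        exact (box_iff' (by omega : d₂ ≤ w) (by positivity)).mpr
          (Nnum_zero_iff.mpr (fun j _ => laurentCoeff_zero p j))⟩
    rw [hhbox, h0box]
  · -- P → net
    intro hP d₁ d₂ hd r₁ r₂ hr₁ hr₂
    have hd₁w : d₁ ≤ w := by omega
    have hd₂w : d₂ ≤ w := by omega
    letI : Fintype (Polynomial.degreeLT (ZMod 2) m) :=
      Fintype.ofEquiv _ (Polynomial.degreeLTEquiv (ZMod 2) m).symm.toEquiv
    set F : Polynomial.degreeLT (ZMod 2) m → Fin (2 ^ d₁) × Fin (2 ^ d₂) := fun h =>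
      (⟨Nnum d₁ (laurentCoeff p h.1), Nnum_lt _ _⟩,
       ⟨Nnum d₂ (laurentCoeff p (h.1 * q %ₘ p)), Nnum_lt _ _⟩) with hF
    have hFinj : Function.Injective F := by
      intro a b hEq
      have h1 : Nnum d₁ (laurentCoeff p a.1) = Nnum d₁ (laurentCoeff p b.1) :=
        congrArg (fun z => (z.1 : ℕ)) hEq
      have h2 : Nnum d₂ (laurentCoeff p (a.1 * q %ₘ p)) =
          Nnum d₂ (laurentCoeff p (b.1 * q %ₘ p)) :=
        congrArg (fun z => (z.2 : ℕ)) hEq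
      have e1 := Nnum_inj h1
      have e2 := Nnum_inj h2
      have hmem : (a.1 + b.1).degree < (m : WithBot ℕ) :=
        Polynomial.mem_degreeLT.mp (Submodule.add_mem _ a.2 b.2)
      have hz1 : ∀ j < d₁, laurentCoeff p (a.1 + b.1) j = 0 := by
        intro j hj
        rw [laurentCoeff_add, e1 j hj]
        exact hzero_add _
      have hz2 : ∀ j < d₂, laurentCoeff p ((a.1 + b.1) * q %ₘ p) j = 0 := by
        intro j hj
        rw [add_mul, Polynomial.add_modByMonic, laurentCoeff_add, e2 j hj]
        exact hzero_add _
      have hv1 := (vanish_iff hp hm hmem (by omega : d₁ ≤ m)).mp hz1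
      have hv2 := (vanish_iff hp hm (hmodlt _) (by omega : d₂ ≤ m)).mp hz2
      have hzero : a.1 + b.1 = 0 := hP (m - d₂) (m - d₁) (by omega) _ hv1 hv2
      exact Subtype.ext (poly_add_eq_zero hzero)
    have hcard : Fintype.card (Polynomial.degreeLT (ZMod 2) m) =
        Fintype.card (Fin (2 ^ d₁) × Fin (2 ^ d₂)) := by
      rw [Fintype.card_congr (Polynomial.degreeLTEquiv (ZMod 2) m).toEquiv]
      simp [Fintype.card_fun, ZMod.card, ← pow_add, hd]
    have hFbij : Function.Bijective F :=
      (Fintype.bijective_iff_injective_and_card F).mpr ⟨hFinj, hcard⟩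
    obtain ⟨h, hFh⟩ := hFbij.2 (⟨r₁, hr₁⟩, ⟨r₂, hr₂⟩)
    have hFh1 : Nnum d₁ (laurentCoeff p h.1) = r₁ := by
      have := congrArg (fun z => (z.1 : ℕ)) hFh
      simpa [hF] using this
    have hFh2 : Nnum d₂ (laurentCoeff p (h.1 * q %ₘ p)) = r₂ := by
      have := congrArg (fun z => (z.2 : ℕ)) hFh
      simpa [hF] using this
    refine ⟨h.1, ⟨Polynomial.mem_degreeLT.mp h.2,
      (box_iff' hd₁w hr₁).mpr hFh1, (box_iff' hd₂w hr₂).mpr hFh2⟩, ?_⟩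
    rintro h' ⟨hdeg', b1, b2⟩
    have hmem' : h' ∈ Polynomial.degreeLT (ZMod 2) m := Polynomial.mem_degreeLT.mpr hdeg'
    have : F ⟨h', hmem'⟩ = F h := by
      rw [hFh]
      exact Prod.ext (Fin.ext ((box_iff' hd₁w hr₁).mp b1))
        (Fin.ext ((box_iff' hd₂w hr₂).mp b2))
    exact congrArg Subtype.val (hFinj this)

theorem tezuka_fushimi (m w : ℕ) (hm : 1 ≤ m) (hw : m ≤ w)
    (p q : Polynomial (ZMod 2)) (hp : p.degree = (m : WithBot ℕ))
    (hq : q.degree < (m : WithBot ℕ)) (hcop : IsCoprime p q) :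
    ((∀ d₁ d₂ : ℕ, d₁ + d₂ = m → ∀ r₁ r₂ : ℕ, r₁ < 2 ^ d₁ → r₂ < 2 ^ d₂ →
        ∃! h : Polynomial (ZMod 2), h.degree < (m : WithBot ℕ) ∧
          ((r₁ : ℝ) / 2 ^ d₁ ≤ nuW w p h ∧ nuW w p h < ((r₁ : ℝ) + 1) / 2 ^ d₁) ∧
          ((r₂ : ℝ) / 2 ^ d₂ ≤ nuW w p (h * q %ₘ p) ∧
            nuW w p (h * q %ₘ p) < ((r₂ : ℝ) + 1) / 2 ^ d₂)) ↔
      ∃ A : ℕ → Polynomial (ZMod 2),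
        (∀ k, 1 ≤ k → k ≤ m → A k = X ∨ A k = X + 1) ∧
        fibPoly A m = p ∧ fibPoly A (m - 1) = q) :=
  (net_iff_P hm hw hp).trans (PC m hm p q hp hq hcop)
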